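/- Let G be a connected graph of order n containing two adjacent vertices x and y, each of degree at least 3, with N(x) ∩ N(y) = ∅. Then γ_{StR}(G) ≤ n − 2. -/

import Mathlib

namespace SimpleGraph

variable {V : Type*}

/-- The degree of a vertex (cardinality of its open neighborhood). -/
noncomputable def deg (G : SimpleGraph V) (v : V) : ℕ := (G.neighborSet v).ncard

/-- Maximum degree. -/
noncomputable def maxDeg [Fintype V] (G : SimpleGraph V) : ℕ :=
  Finset.univ.sup fun v => G.deg v

/-- A strong Roman dominating function: `f : V → {0,1,...,⌈Δ/2⌉+1}` such that every vertex
with value 0 has a neighbor `w` with `f w ≥ 2` and `f w ≥ 1 + ⌈|N(w) ∩ B₀|/2⌉`. -/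
def IsStRDF [Fintype V] (G : SimpleGraph V) (f : V → ℕ) : Prop :=
  (∀ v, f v ≤ (G.maxDeg + 1) / 2 + 1) ∧
  ∀ v, f v = 0 → ∃ w, G.Adj v w ∧ 2 ≤ f w ∧
    1 + ((G.neighborSet w ∩ {u | f u = 0}).ncard + 1) / 2 ≤ f w

/-- The strong Roman domination number. -/
noncomputable def gammaStR [Fintype V] (G : SimpleGraph V) : ℕ :=
  sInf {k | ∃ f, G.IsStRDF f ∧ ∑ v, f v = k}

/-- A Roman dominating function. -/
def IsRDF (G : SimpleGraph V) (f : V → ℕ) : Prop :=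
  (∀ v, f v ≤ 2) ∧ ∀ v, f v = 0 → ∃ w, G.Adj v w ∧ f w = 2

/-- The Roman domination number. -/
noncomputable def gammaR [Fintype V] (G : SimpleGraph V) : ℕ :=
  sInf {k | ∃ f, G.IsRDF f ∧ ∑ v, f v = k}

/-- A dominating set. -/
def IsDomSet (G : SimpleGraph V) (D : Set V) : Prop :=
  ∀ v ∉ D, ∃ w ∈ D, G.Adj v w

/-- The domination number. -/
noncomputable def gammaDom [Fintype V] (G : SimpleGraph V) : ℕ :=
  sInf {k | ∃ D : Set V, G.IsDomSet D ∧ D.ncard = k}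

end SimpleGraph

/-- If a connected graph `G` of order `n` has two adjacent vertices `x`, `y` of degree at
least 3 with `N(x) ∩ N(y) = ∅`, then `γ_{StR}(G) ≤ n − 2`. -/
theorem stmt12 {V : Type*} [Fintype V] (G : SimpleGraph V) (hc : G.Connected)
    (x y : V) (hxy : G.Adj x y) (hx : 3 ≤ G.deg x) (hy : 3 ≤ G.deg y)
    (hN : G.neighborSet x ∩ G.neighborSet y = ∅) :
    G.gammaStR ≤ Fintype.card V - 2 := by
  classical
  set n := Fintype.card V with hn
  have hne : x ≠ y := hxy.ne
  set dx := G.deg x with hdx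
  set dy := G.deg y with hdy
  set f : V → ℕ := fun v => if v = x then 1 + dx / 2 else if v = y then 1 + dy / 2
    else if v ∈ G.neighborSet x ∪ G.neighborSet y then 0 else 1 with hf
  have hfx : f x = 1 + dx / 2 := by simp [hf]
  have hfy : f y = 1 + dy / 2 := by simp [hf, hne.symm]
  have hfle : ∀ v, v ≠ x → v ≠ y → f v ≤ 1 := by
    intro v h1 h2
    simp only [hf, if_neg h1, if_neg h2]
    split <;> omega
  -- f is an StRDF
  have hStRDF : G.IsStRDF f := by
    constructor
    · intro v
      have hxΔ : dx ≤ G.maxDeg := Finset.le_sup (f := fun v => G.deg v) (Finset.mem_univ x)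
      have hyΔ : dy ≤ G.maxDeg := Finset.le_sup (f := fun v => G.deg v) (Finset.mem_univ y)
      have h2x : dx / 2 ≤ (G.maxDeg + 1) / 2 := Nat.div_le_div_right (by omega)
      have h2y : dy / 2 ≤ (G.maxDeg + 1) / 2 := Nat.div_le_div_right (by omega)
      simp only [hf]
      split_ifs <;> omega
    · intro v hv
      simp only [hf] at hv
      split_ifs at hv with h1 h2 h3
      · omega
      · omega
      · -- v ∈ N(x) ∪ N(y)
        rcases h3 with h3 | h3
        · -- v ∈ N(x), use w := x
          refine ⟨x, (G.mem_neighborSet x v |>.mp h3).symm, ?_, ?_⟩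
          · rw [hfx]; omega
          · rw [hfx]
            have hsub : G.neighborSet x ∩ {u | f u = 0} ⊆ G.neighborSet x \ {y} := by
              rintro u ⟨hu1, hu2⟩
              refine ⟨hu1, ?_⟩
              simp only [Set.mem_singleton_iff]
              rintro rfl
              rw [Set.mem_setOf_eq, hfy] at hu2; omega
            have hyN : y ∈ G.neighborSet x := hxy
            have hcard : (G.neighborSet x \ {y}).ncard = dx - 1 := by
              rw [Set.ncard_diff_singleton_of_mem hyN]
              rfl
            have hle : (G.neighborSet x ∩ {u | f u = 0}).ncard ≤ dx - 1 := by
              rw [← hcard]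
              exact Set.ncard_le_ncard hsub (Set.toFinite _)
            have : (G.neighborSet x ∩ {u | f u = 0}).ncard + 1 ≤ dx := by omega
            have h9 : ((G.neighborSet x ∩ {u | f u = 0}).ncard + 1) / 2 ≤ dx / 2 :=
              Nat.div_le_div_right this
            omega
        · -- v ∈ N(y), use w := y
          refine ⟨y, (G.mem_neighborSet y v |>.mp h3).symm, ?_, ?_⟩
          · rw [hfy]; omega
          · rw [hfy]
            have hsub : G.neighborSet y ∩ {u | f u = 0} ⊆ G.neighborSet y \ {x} := by
              rintro u ⟨hu1, hu2⟩
              refine ⟨hu1, ?_⟩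
              simp only [Set.mem_singleton_iff]
              rintro rfl
              rw [Set.mem_setOf_eq, hfx] at hu2; omega
            have hxN : x ∈ G.neighborSet y := hxy.symm
            have hcard : (G.neighborSet y \ {x}).ncard = dy - 1 := by
              rw [Set.ncard_diff_singleton_of_mem hxN]
              rfl
            have hle : (G.neighborSet y ∩ {u | f u = 0}).ncard ≤ dy - 1 := by
              rw [← hcard]
              exact Set.ncard_le_ncard hsub (Set.toFinite _)
            have : (G.neighborSet y ∩ {u | f u = 0}).ncard + 1 ≤ dy := by omega
            have h9 : ((G.neighborSet y ∩ {u | f u = 0}).ncard + 1) / 2 ≤ dy / 2 :=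
              Nat.div_le_div_right this
            omega
  -- the sum of f
  set Zs : Set V := (G.neighborSet x ∪ G.neighborSet y) \ {x, y} with hZs
  set Z : Finset V := Zs.toFinset with hZ
  have hcardU : (G.neighborSet x ∪ G.neighborSet y).ncard = dx + dy := by
    rw [Set.ncard_union_eq (Set.disjoint_iff_inter_eq_empty.mpr hN)
      (Set.toFinite _) (Set.toFinite _)]
    rw [hdx, hdy]; rfl
  have hsubxy : ({x, y} : Set V) ⊆ G.neighborSet x ∪ G.neighborSet y := by
    rintro u (rfl | rfl)
    · exact Or.inr hxy.symm
    · exact Or.inl hxy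
  have hZcard : Z.card = dx + dy - 2 := by
    rw [hZ, ← Set.ncard_eq_toFinset_card', hZs,
      Set.ncard_diff hsubxy (Set.toFinite _), hcardU, Set.ncard_pair hne]
  have hfZ : ∀ v ∈ Z, f v = 0 := by
    intro v hv
    rw [hZ, Set.mem_toFinset, hZs] at hv
    obtain ⟨hv1, hv2⟩ := hv
    simp only [Set.mem_insert_iff, Set.mem_singleton_iff, not_or] at hv2
    simp only [hf, if_neg hv2.1, if_neg hv2.2, if_pos hv1]
  set S : Finset V := Finset.univ \ Z with hS
  have hxS : x ∈ S := by
    simp only [hS, Finset.mem_sdiff, Finset.mem_univ, true_and, hZ, Set.mem_toFinset, hZs]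
    rintro ⟨-, h⟩; exact h (Or.inl rfl)
  have hyS : y ∈ S := by
    simp only [hS, Finset.mem_sdiff, Finset.mem_univ, true_and, hZ, Set.mem_toFinset, hZs]
    rintro ⟨-, h⟩; exact h (Or.inr rfl)
  have hsum1 : ∑ v, f v = ∑ v ∈ S, f v := by
    refine (Finset.sum_subset (Finset.subset_univ S) ?_).symm
    intro v _ hv
    exact hfZ v (by simpa [hS] using hv)
  have hyS' : y ∈ S.erase x := Finset.mem_erase.mpr ⟨hne.symm, hyS⟩
  have hsum2 : ∑ v ∈ S, f v = f x + (f y + ∑ v ∈ (S.erase x).erase y, f v) := by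
    rw [← Finset.add_sum_erase _ f hxS, ← Finset.add_sum_erase _ f hyS']
  set T : Finset V := (S.erase x).erase y with hT
  have hsum3 : ∑ v ∈ T, f v ≤ T.card := by
    calc ∑ v ∈ T, f v ≤ ∑ _v ∈ T, 1 := by
          refine Finset.sum_le_sum ?_
          intro v hv
          rw [hT] at hv
          exact hfle v (Finset.ne_of_mem_erase (Finset.mem_of_mem_erase hv))
            (Finset.ne_of_mem_erase hv)
      _ = T.card := by simp
  have hTcard : T.card = S.card - 2 := by
    rw [hT, Finset.card_erase_of_mem hyS', Finset.card_erase_of_mem hxS]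
    omega
  have hScard : S.card = n - Z.card := by
    rw [hS, Finset.card_sdiff, Finset.inter_univ, Finset.card_univ]
  have hZn : Z.card ≤ n := by
    exact Finset.card_le_univ Z
  have hS2 : 2 ≤ S.card := by
    have : ({x, y} : Finset V) ⊆ S := by
      intro u hu
      simp only [Finset.mem_insert, Finset.mem_singleton] at hu
      rcases hu with rfl | rfl <;> assumption
    have h2 := Finset.card_le_card this
    rwa [Finset.card_pair hne] at h2
  -- conclude
  have hsumle : ∑ v, f v ≤ n - 2 := by
    rw [hsum1, hsum2, hfx, hfy]
    have h1 : 1 + dx / 2 + (1 + dy / 2 + ∑ v ∈ T, f v) ≤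
        1 + dx / 2 + (1 + dy / 2 + T.card) := by omega
    refine h1.trans ?_
    omega
  exact le_trans (Nat.sInf_le ⟨f, hStRDF, rfl⟩) hsumle
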